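/- The evaluation vector y of the polynomial f_y(z_1,…,z_m) = (z_1⋯z_{q−1} + 1)(z_m + 1) over F_2^m has Hamming weight 2^{m−1} − 2^{m−q}. -/
import Mathlib

/-- Counting functions `Fin m → ZMod 2` fixed on a finset `A`. -/
lemma count_fixed (m : ℕ) (A : Finset (Fin m)) (g : Fin m → ZMod 2) :
    (Finset.univ.filter (fun z : Fin m → ZMod 2 => ∀ i ∈ A, z i = g i)).card
      = 2 ^ (m - A.card) := by
  classical
  rw [← Fintype.card_subtype]
  have e : {z : Fin m → ZMod 2 // ∀ i ∈ A, z i = g i} ≃ ({i : Fin m // i ∉ A} → ZMod 2) :=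
    { toFun := fun z i => z.1 i.1
      invFun := fun f => ⟨fun i => if h : i ∈ A then g i else f ⟨i, h⟩,
        fun i hi => by simp [hi]⟩
      left_inv := fun z => by
        ext i
        by_cases h : i ∈ A
        · simp [h, z.2 i h]
        · simp [h]
      right_inv := fun f => by
        ext i
        simp [i.2] }
  rw [Fintype.card_congr e, Fintype.card_fun, ZMod.card]
  congr 1
  rw [Fintype.card_subtype]
  simp only [Finset.filter_not, Finset.filter_mem_eq_inter, Finset.univ_inter]
  rw [Finset.card_sdiff_of_subset (Finset.subset_univ _)]
  simp

theorem weight_of_fy (m q : ℕ) (hq : 2 ≤ q) (hm : q ≤ m) :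
    (Finset.univ.filter (fun z : Fin m → ZMod 2 =>
        ((∏ i ∈ Finset.univ.filter (fun i : Fin m => (i : ℕ) < q - 1), z i) + 1) *
          (z ⟨m - 1, by omega⟩ + 1) = 1)).card
      = 2 ^ (m - 1) - 2 ^ (m - q) := by
  classical
  set B : Finset (Fin m) := Finset.univ.filter (fun i : Fin m => (i : ℕ) < q - 1) with hB
  set w : Fin m := ⟨m - 1, by omega⟩ with hw
  have hwval : (w : ℕ) = m - 1 := rfl
  have hwlt : ¬ ((w : ℕ) < q - 1) := by omega
  have hwB : w ∉ B := by
    simp only [hB, Finset.mem_filter, Finset.mem_univ, true_and]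
    exact hwlt
  have hBcard : B.card = q - 1 := by
    rw [hB, ← Fintype.card_subtype]
    have e : {i : Fin m // (i : ℕ) < q - 1} ≃ Fin (q - 1) :=
      { toFun := fun i => ⟨i.1, i.2⟩
        invFun := fun j => ⟨⟨j.1, by omega⟩, j.2⟩
        left_inv := fun i => rfl
        right_inv := fun j => rfl }
    rw [Fintype.card_congr e, Fintype.card_fin]
  have key : ∀ a b : ZMod 2, ((a + 1) * (b + 1) = 1 ↔ a = 0 ∧ b = 0) := by decide
  have hpred : ∀ z : Fin m → ZMod 2,
      (((∏ i ∈ B, z i) + 1) * (z w + 1) = 1) ↔ (z w = 0 ∧ (∏ i ∈ B, z i) = 0) := by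
    intro z
    rw [key]
    tauto
  rw [show (Finset.univ.filter (fun z : Fin m → ZMod 2 =>
        ((∏ i ∈ Finset.univ.filter (fun i : Fin m => (i : ℕ) < q - 1), z i) + 1) *
          (z ⟨m - 1, by omega⟩ + 1) = 1))
      = Finset.univ.filter (fun z : Fin m → ZMod 2 => z w = 0 ∧ (∏ i ∈ B, z i) = 0) from
    Finset.filter_congr (fun z _ => hpred z)]
  have hsplit :
      (Finset.univ.filter (fun z : Fin m → ZMod 2 => z w = 0 ∧ (∏ i ∈ B, z i) = 0)).card
        + (Finset.univ.filter (fun z : Fin m → ZMod 2 => z w = 0 ∧ (∏ i ∈ B, z i) = 1)).card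
      = (Finset.univ.filter (fun z : Fin m → ZMod 2 => z w = 0)).card := by
    have h01 : ∀ a : ZMod 2, ¬ a = 0 ↔ a = 1 := by decide
    rw [← Finset.filter_filter, ← Finset.filter_filter]
    rw [show (Finset.filter (fun z : Fin m → ZMod 2 => (∏ i ∈ B, z i) = 1)
        (Finset.filter (fun z => z w = 0) Finset.univ))
      = (Finset.filter (fun z : Fin m → ZMod 2 => ¬ (∏ i ∈ B, z i) = 0)
        (Finset.filter (fun z => z w = 0) Finset.univ)) from
      Finset.filter_congr (fun z _ => by rw [h01])]
    exact Finset.card_filter_add_card_filter_not _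
  have h1 : (Finset.univ.filter (fun z : Fin m → ZMod 2 => z w = 0)).card = 2 ^ (m - 1) := by
    have := count_fixed m {w} (fun _ => 0)
    simp only [Finset.mem_singleton, forall_eq, Finset.card_singleton] at this
    exact this
  have h2 : (Finset.univ.filter
      (fun z : Fin m → ZMod 2 => z w = 0 ∧ (∏ i ∈ B, z i) = 1)).card = 2 ^ (m - q) := by
    have hprod : ∀ z : Fin m → ZMod 2, (∏ i ∈ B, z i) = 1 ↔ ∀ i ∈ B, z i = 1 := by
      intro z
      constructor
      · intro h
        by_contra hc
        push_neg at hc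
        obtain ⟨i, hi, hzi⟩ := hc
        have hz0 : z i = 0 := by
          have h01 : ∀ a : ZMod 2, a ≠ 1 → a = 0 := by decide
          exact h01 _ hzi
        rw [Finset.prod_eq_zero hi hz0] at h
        exact absurd h (by decide)
      · exact fun h => Finset.prod_eq_one h
    have hcond : ∀ z : Fin m → ZMod 2,
        (z w = 0 ∧ (∏ i ∈ B, z i) = 1) ↔
          ∀ i ∈ insert w B, z i = (fun i : Fin m => if (i : ℕ) < q - 1 then (1 : ZMod 2) else 0) i := by
      intro z
      rw [hprod]
      constructor
      · intro ⟨h0, h1⟩ i hi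
        rcases Finset.mem_insert.mp hi with h | h
        · subst h
          simpa [hwlt] using h0
        · simp only [hB, Finset.mem_filter, Finset.mem_univ, true_and] at h
          simpa [h] using h1 i (by rw [hB]; simp [h])
      · intro h
        constructor
        · simpa [hwlt] using h w (Finset.mem_insert_self _ _)
        · intro i hi
          have hlt : (i : ℕ) < q - 1 := by
            have := hi; rw [hB] at this; simpa using this
          simpa [hlt] using h i (Finset.mem_insert_of_mem hi)
    have hseteq : (Finset.univ.filter
        (fun z : Fin m → ZMod 2 => z w = 0 ∧ (∏ i ∈ B, z i) = 1))
      = Finset.univ.filter (fun z : Fin m → ZMod 2 =>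
          ∀ i ∈ insert w B, z i = (fun i : Fin m => if (i : ℕ) < q - 1 then (1 : ZMod 2) else 0) i) :=
      Finset.filter_congr (fun z _ => hcond z)
    rw [hseteq, count_fixed m (insert w B) (fun i : Fin m => if (i : ℕ) < q - 1 then (1 : ZMod 2) else 0), Finset.card_insert_of_notMem hwB, hBcard]
    congr 1
    clear_value B w
    clear hseteq hcond hprod h1 hsplit hpred key hBcard hwB hwlt hwval hB hw B w
    omega
  rw [h1, h2] at hsplit
  exact Nat.eq_sub_of_add_eq hsplit
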